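/- The subgroup of SL₂(Z) generated by the matrices [[1,0],[2,1]] and [[1,2],[0,1]] is a free group of rank 2. -/
import Mathlib

namespace Sl2FreeAux

open Pointwise

/-- Nonzero integer vectors in the plane. -/
abbrev V := {v : Fin 2 → ℤ // v ≠ 0}

noncomputable instance : MulAction (Matrix.SpecialLinearGroup (Fin 2) ℤ) V where
  smul g v := ⟨g.1.mulVec v.1, by
    intro h
    apply v.2
    have h2 : (g⁻¹).1.mulVec (g.1.mulVec v.1) = (g⁻¹).1.mulVec 0 := by rw [h]
    rw [Matrix.mulVec_mulVec, Matrix.mulVec_zero] at h2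
    have h3 : ((g⁻¹).1 * g.1) = ((g⁻¹ * g : Matrix.SpecialLinearGroup (Fin 2) ℤ) : Matrix (Fin 2) (Fin 2) ℤ) := rfl
    rw [h3, inv_mul_cancel] at h2
    simpa using h2⟩
  one_smul v := by
    apply Subtype.ext
    show (1 : Matrix.SpecialLinearGroup (Fin 2) ℤ).1.mulVec v.1 = v.1
    simp
  mul_smul g h v := by
    apply Subtype.ext
    show (g * h : Matrix.SpecialLinearGroup (Fin 2) ℤ).1.mulVec v.1 = g.1.mulVec (h.1.mulVec v.1)
    rw [Matrix.mulVec_mulVec]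
    rfl

lemma smul_coe (g : Matrix.SpecialLinearGroup (Fin 2) ℤ) (v : V) :
    (g • v).1 = g.1.mulVec v.1 := rfl

def MA : Matrix.SpecialLinearGroup (Fin 2) ℤ :=
  ⟨!![1, 0; 2, 1], by norm_num [Matrix.det_fin_two_of]⟩
def MB : Matrix.SpecialLinearGroup (Fin 2) ℤ :=
  ⟨!![1, 2; 0, 1], by norm_num [Matrix.det_fin_two_of]⟩

/-- `{|y| > |x|, xy > 0}` -/
def XA : Set V := {v | (0 < v.1 0 ∧ v.1 0 < v.1 1) ∨ (v.1 0 < 0 ∧ v.1 1 < v.1 0)}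
/-- `{|y| ≥ |x|, xy ≤ 0}` -/
def YA : Set V := {v | (0 ≤ v.1 0 ∧ v.1 1 ≤ -v.1 0) ∨ (v.1 0 ≤ 0 ∧ -v.1 0 ≤ v.1 1)}
/-- `{|x| ≥ |y|, xy > 0}` -/
def XB : Set V := {v | (0 < v.1 1 ∧ v.1 1 ≤ v.1 0) ∨ (v.1 1 < 0 ∧ v.1 0 ≤ v.1 1)}
/-- `{|x| > |y|, xy ≤ 0}` -/
def YB : Set V := {v | (0 ≤ v.1 1 ∧ v.1 0 < -v.1 1) ∨ (v.1 1 ≤ 0 ∧ -v.1 1 < v.1 0)}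

lemma ne_zero_coords (v : V) : v.1 0 ≠ 0 ∨ v.1 1 ≠ 0 := by
  by_contra h
  push_neg at h
  apply v.2
  funext i
  fin_cases i
  · exact h.1
  · exact h.2

lemma mulVec_eq (a b c d : ℤ) (v : Fin 2 → ℤ) :
    (!![a, b; c, d]).mulVec v = ![a * v 0 + b * v 1, c * v 0 + d * v 1] := by
  funext i
  fin_cases i <;>
    simp [Matrix.mulVec, dotProduct, Fin.sum_univ_two]

lemma dXAXB : Disjoint XA XB := by
  rw [Set.disjoint_left]; rintro v hv hv'
  simp only [XA, XB, Set.mem_setOf_eq] at hv hv'; omega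

lemma dYAYB : Disjoint YA YB := by
  rw [Set.disjoint_left]; rintro v hv hv'
  have := ne_zero_coords v
  simp only [YA, YB, Set.mem_setOf_eq] at hv hv'; omega

lemma dXAYA : Disjoint XA YA := by
  rw [Set.disjoint_left]; rintro v hv hv'
  simp only [XA, YA, Set.mem_setOf_eq] at hv hv'; omega

lemma dXAYB : Disjoint XA YB := by
  rw [Set.disjoint_left]; rintro v hv hv'
  simp only [XA, YB, Set.mem_setOf_eq] at hv hv'; omega

lemma dXBYA : Disjoint XB YA := by
  rw [Set.disjoint_left]; rintro v hv hv'
  simp only [XB, YA, Set.mem_setOf_eq] at hv hv'; omega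

lemma dXBYB : Disjoint XB YB := by
  rw [Set.disjoint_left]; rintro v hv hv'
  simp only [XB, YB, Set.mem_setOf_eq] at hv hv'; omega

lemma pingA : MA • YAᶜ ⊆ XA := by
  rintro _ ⟨v, hv, rfl⟩
  have hnz := ne_zero_coords v
  simp only [Set.mem_compl_iff, YA, Set.mem_setOf_eq] at hv
  have h : (MA • v).1 = ![1 * v.1 0 + 0 * v.1 1, 2 * v.1 0 + 1 * v.1 1] := by
    rw [smul_coe]
    show (!![(1:ℤ), 0; 2, 1]).mulVec v.1 = _
    rw [mulVec_eq]
  simp only [XA, Set.mem_setOf_eq, h, Matrix.cons_val_zero, Matrix.cons_val_one,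
    Matrix.head_cons]
  omega

lemma pingB : MB • YBᶜ ⊆ XB := by
  rintro _ ⟨v, hv, rfl⟩
  have hnz := ne_zero_coords v
  simp only [Set.mem_compl_iff, YB, Set.mem_setOf_eq] at hv
  have h : (MB • v).1 = ![1 * v.1 0 + 2 * v.1 1, 0 * v.1 0 + 1 * v.1 1] := by
    rw [smul_coe]
    show (!![(1:ℤ), 2; 0, 1]).mulVec v.1 = _
    rw [mulVec_eq]
  simp only [XB, Set.mem_setOf_eq, h, Matrix.cons_val_zero, Matrix.cons_val_one,
    Matrix.head_cons]
  omega

lemma pingA' : MA⁻¹ • XAᶜ ⊆ YA := by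
  rintro _ ⟨v, hv, rfl⟩
  have hnz := ne_zero_coords v
  simp only [Set.mem_compl_iff, XA, Set.mem_setOf_eq] at hv
  have h : (MA⁻¹ • v).1 = ![1 * v.1 0 + 0 * v.1 1, -2 * v.1 0 + 1 * v.1 1] := by
    rw [smul_coe, Matrix.SpecialLinearGroup.coe_inv]
    show (Matrix.adjugate !![(1:ℤ), 0; 2, 1]).mulVec v.1 = _
    rw [Matrix.adjugate_fin_two_of, mulVec_eq]
    norm_num
  simp only [YA, Set.mem_setOf_eq, h, Matrix.cons_val_zero, Matrix.cons_val_one,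
    Matrix.head_cons]
  omega

lemma pingB' : MB⁻¹ • XBᶜ ⊆ YB := by
  rintro _ ⟨v, hv, rfl⟩
  have hnz := ne_zero_coords v
  simp only [Set.mem_compl_iff, XB, Set.mem_setOf_eq] at hv
  have h : (MB⁻¹ • v).1 = ![1 * v.1 0 + -2 * v.1 1, 0 * v.1 0 + 1 * v.1 1] := by
    rw [smul_coe, Matrix.SpecialLinearGroup.coe_inv]
    show (Matrix.adjugate !![(1:ℤ), 2; 0, 1]).mulVec v.1 = _
    rw [Matrix.adjugate_fin_two_of, mulVec_eq]
    norm_num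
  simp only [YB, Set.mem_setOf_eq, h, Matrix.cons_val_zero, Matrix.cons_val_one,
    Matrix.head_cons]
  omega

lemma XAne : XA.Nonempty :=
  ⟨⟨![1, 2], by intro h; have := congrFun h 0; simp at this⟩, Or.inl (by norm_num [XA])⟩

lemma XBne : XB.Nonempty :=
  ⟨⟨![2, 1], by intro h; have := congrFun h 0; simp at this⟩, Or.inl (by norm_num [XB])⟩

end Sl2FreeAux

open Sl2FreeAux in
/-- The subgroup of `SL₂(ℤ)` generated by `[[1,0],[2,1]]` and `[[1,2],[0,1]]` is free
of rank 2: the homomorphism from the free group on two generators sending the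
generators to these matrices is injective, and its range is the subgroup they
generate. -/
theorem sl2_free_subgroup :
    let A : Matrix.SpecialLinearGroup (Fin 2) ℤ :=
      ⟨!![1, 0; 2, 1], by norm_num [Matrix.det_fin_two_of]⟩
    let B : Matrix.SpecialLinearGroup (Fin 2) ℤ :=
      ⟨!![1, 2; 0, 1], by norm_num [Matrix.det_fin_two_of]⟩
    Function.Injective (FreeGroup.lift (![A, B])) ∧
      (FreeGroup.lift (![A, B])).range = Subgroup.closure {A, B} := by
  intro A B
  constructor
  · apply FreeGroup.injective_lift_of_ping_pong ![A, B] ![XA, XB] ![YA, YB]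
    · intro i
      fin_cases i
      · exact XAne
      · exact XBne
    · intro i j hij
      fin_cases i <;> fin_cases j
      · exact absurd rfl hij
      · exact dXAXB
      · exact dXAXB.symm
      · exact absurd rfl hij
    · intro i j hij
      fin_cases i <;> fin_cases j
      · exact absurd rfl hij
      · exact dYAYB
      · exact dYAYB.symm
      · exact absurd rfl hij
    · intro i j
      fin_cases i <;> fin_cases j
      · exact dXAYA
      · exact dXAYB
      · exact dXBYA
      · exact dXBYB
    · intro i
      fin_cases i
      · exact pingA
      · exact pingB
    · intro i
      fin_cases i
      · exact pingA'
      · exact pingB'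
  · rw [FreeGroup.range_lift_eq_closure]
    congr 1
    ext x
    constructor
    · rintro ⟨i, rfl⟩
      fin_cases i
      · exact Or.inl rfl
      · exact Or.inr rfl
    · rintro (rfl | rfl)
      · exact ⟨0, rfl⟩
      · exact ⟨1, rfl⟩
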